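/- arXiv:0706.2457 — 4 statements merged into one kernel-verified Lean document; each statement's English description precedes it below -/
import Mathlib

section
/- If H is a bounded self-adjoint operator and θ is a real number with |θ| ≤ π/4, then 1 + i e^{iθ} H is invertible and ‖(1 + i e^{iθ} H)⁻¹‖ ≤ √2. -/
open Complex Real

/-- Key coercivity bound: if `H` is self-adjoint and `z` is a unimodular complex
number with `(z.re)^2 ≤ 1/2`, then `‖x‖ ≤ √2 * ‖(1 + z • H) x‖`. -/
lemma aux_coercive {E : Type*} [NormedAddCommGroup E] [InnerProductSpace ℂ E] [CompleteSpace E]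
    (H : E →L[ℂ] E) (hH : IsSelfAdjoint H) (z : ℂ) (hz : ‖z‖ = 1)
    (hre : z.re ^ 2 ≤ 1 / 2) (x : E) :
    ‖x‖ ≤ Real.sqrt 2 * ‖(1 + z • H) x‖ := by
  rcases eq_or_ne x 0 with rfl | hx
  · simp [Real.sqrt_nonneg]
  -- the inner product ⟪x, H x⟫ is real
  have hsym := hH.isSymmetric
  have hreal : (inner ℂ x (H x) : ℂ) = ((inner ℂ x (H x) : ℂ).re : ℂ) := by
    have h1 : (starRingEnd ℂ) (inner ℂ x (H x) : ℂ) = inner ℂ x (H x) := by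
      rw [inner_conj_symm]
      exact hsym x x
    exact (Complex.conj_eq_iff_re.mp h1).symm
  set t : ℝ := (inner ℂ x (H x) : ℂ).re with ht
  set s : ℝ := ‖x‖ ^ 2 with hs
  have hinner : (inner ℂ x ((1 + z • H) x) : ℂ) = (s : ℂ) + z * t := by
    have h1 : (inner ℂ x ((1 + z • H) x) : ℂ)
        = (inner ℂ x x : ℂ) + z * (inner ℂ x (H x) : ℂ) := by
      simp only [ContinuousLinearMap.add_apply, ContinuousLinearMap.one_apply,
        ContinuousLinearMap.smul_apply, inner_add_right, inner_smul_right]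
    have h2 : ((s : ℝ) : ℂ) = (‖x‖ : ℂ) ^ 2 := by
      rw [hs]; push_cast; ring
    rw [h1, hreal, inner_self_eq_norm_sq_to_K, h2]
    norm_num
  -- lower bound on |⟪x, A x⟫|
  have habs2 : ‖(s : ℂ) + z * t‖ ^ 2 = (s + z.re * t) ^ 2 + (z.im * t) ^ 2 := by
    rw [Complex.sq_norm, Complex.normSq_apply]
    simp [Complex.add_re, Complex.add_im, Complex.mul_re, Complex.mul_im]
    ring
  have hz2 : z.re ^ 2 + z.im ^ 2 = 1 := by
    have h1 : ‖z‖ = 1 := hz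
    have h2 := Complex.sq_norm z
    rw [Complex.normSq_apply, h1] at h2
    nlinarith [h2]
  have hkey : s ^ 2 ≤ 2 * ‖(s : ℂ) + z * t‖ ^ 2 := by
    rw [habs2]
    nlinarith [sq_nonneg (s + 2 * z.re * t), sq_nonneg t, sq_nonneg (z.re * t)]
  have habs_nonneg : (0 : ℝ) ≤ ‖(s : ℂ) + z * t‖ := norm_nonneg _
  have hsle : s ≤ Real.sqrt 2 * ‖(s : ℂ) + z * t‖ := by
    have hs0 : 0 ≤ s := by positivity
    have h2 : s ^ 2 ≤ (Real.sqrt 2 * ‖(s : ℂ) + z * t‖) ^ 2 := by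
      rw [mul_pow, Real.sq_sqrt (by norm_num : (0:ℝ) ≤ 2)]
      linarith [hkey]
    calc s = Real.sqrt (s ^ 2) := (Real.sqrt_sq hs0).symm
      _ ≤ Real.sqrt ((Real.sqrt 2 * ‖(s : ℂ) + z * t‖) ^ 2) :=
          Real.sqrt_le_sqrt h2
      _ = Real.sqrt 2 * ‖(s : ℂ) + z * t‖ :=
          Real.sqrt_sq (by positivity)
  -- Cauchy-Schwarz
  have hcs : ‖(s : ℂ) + z * t‖ ≤ ‖x‖ * ‖(1 + z • H) x‖ := by
    rw [← hinner]
    exact norm_inner_le_norm x _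
  have hxpos : 0 < ‖x‖ := norm_pos_iff.mpr hx
  have : ‖x‖ ^ 2 ≤ Real.sqrt 2 * (‖x‖ * ‖(1 + z • H) x‖) := by
    calc ‖x‖ ^ 2 = s := hs.symm
      _ ≤ Real.sqrt 2 * ‖(s : ℂ) + z * t‖ := hsle
      _ ≤ Real.sqrt 2 * (‖x‖ * ‖(1 + z • H) x‖) := by
          exact mul_le_mul_of_nonneg_left hcs (Real.sqrt_nonneg 2)
  nlinarith [this, hxpos]

/-- If `H` is a bounded self-adjoint operator and `|θ| ≤ π/4`, then `1 + i e^{iθ} H`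
is invertible and `‖(1 + i e^{iθ} H)⁻¹‖ ≤ √2`. -/
theorem inverse_one_add_I_exp_smul_selfAdjoint_norm_le_sqrt_two
    {E : Type*} [NormedAddCommGroup E] [InnerProductSpace ℂ E] [CompleteSpace E]
    (H : E →L[ℂ] E) (hH : IsSelfAdjoint H) (θ : ℝ) (hθ : |θ| ≤ π / 4) :
    ∃ B : E →L[ℂ] E,
      (1 + (Complex.I * Complex.exp (θ * Complex.I)) • H) * B = 1 ∧
      B * (1 + (Complex.I * Complex.exp (θ * Complex.I)) • H) = 1 ∧
      ‖B‖ ≤ Real.sqrt 2 := by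
  set z : ℂ := Complex.I * Complex.exp (θ * Complex.I) with hz_def
  have hz_norm : ‖z‖ = 1 := by
    rw [hz_def, norm_mul, Complex.norm_I]
    simp [Complex.norm_exp]
  have hz_re : z.re = -Real.sin θ := by
    rw [hz_def]
    rw [show ((θ : ℂ) * Complex.I) = ((θ : ℝ) : ℂ) * Complex.I from rfl]
    simp [Complex.mul_re, Complex.exp_ofReal_mul_I_re, Complex.exp_ofReal_mul_I_im]
  have hsin2 : z.re ^ 2 ≤ 1 / 2 := by
    rw [hz_re]
    have hcos : 0 ≤ Real.cos (2 * θ) := by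
      apply Real.cos_nonneg_of_mem_Icc
      constructor
      · have := neg_abs_le θ; rw [abs_le] at hθ; linarith [hθ.1]
      · rw [abs_le] at hθ; linarith [hθ.2]
    have h2 : Real.cos (2 * θ) = 1 - 2 * Real.sin θ ^ 2 := Real.cos_two_mul' θ ▸ by
      rw [Real.cos_sq' θ] at *
      nlinarith [Real.sin_sq_add_cos_sq θ]
    nlinarith
  have hzc_re : (starRingEnd ℂ z).re = -Real.sin θ := by
    rw [Complex.conj_re]; exact hz_re
  have hzc_norm : ‖starRingEnd ℂ z‖ = 1 := by
    rwa [RCLike.norm_conj]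
  set A : E →L[ℂ] E := 1 + z • H with hA_def
  have hbound : ∀ x, ‖x‖ ≤ Real.sqrt 2 * ‖A x‖ :=
    aux_coercive H hH z hz_norm hsin2
  have hstar : ContinuousLinearMap.adjoint A = 1 + (starRingEnd ℂ z) • H := by
    rw [← ContinuousLinearMap.star_eq_adjoint, hA_def, star_add, star_one, star_smul,
      hH.star_eq]
    rfl
  have hbound' : ∀ x, ‖x‖ ≤ Real.sqrt 2 * ‖(ContinuousLinearMap.adjoint A) x‖ := by
    intro x
    rw [hstar]
    exact aux_coercive H hH _ hzc_norm (by rw [hzc_re]; rw [hz_re] at hsin2; exact hsin2) x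
  -- A is injective
  have hanti : AntilipschitzWith (Real.sqrt 2).toNNReal A := by
    apply A.antilipschitz_of_bound
    intro x
    rw [Real.coe_toNNReal _ (Real.sqrt_nonneg 2)]
    exact hbound x
  have hinj : Function.Injective A := hanti.injective
  -- range of A is closed
  have hclosed : IsClosed (Set.range A) := hanti.isClosed_range A.uniformContinuous
  have hrange_closed : IsClosed ((LinearMap.range (A : E →ₗ[ℂ] E) : Submodule ℂ E) : Set E) := by
    have hco : ((LinearMap.range (A : E →ₗ[ℂ] E) : Submodule ℂ E) : Set E) = Set.range A :=
      LinearMap.coe_range _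
    rwa [hco]
  haveI : CompleteSpace (LinearMap.range (A : E →ₗ[ℂ] E)) := hrange_closed.completeSpace_coe
  -- range of A is dense, hence all of E
  have hrange : LinearMap.range (A : E →ₗ[ℂ] E) = ⊤ := by
    rw [← Submodule.orthogonal_eq_bot_iff]
    rw [Submodule.eq_bot_iff]
    intro y hy
    have h0 : (ContinuousLinearMap.adjoint A) y = 0 := by
      have := hy (A ((ContinuousLinearMap.adjoint A) y)) ⟨_, rfl⟩
      rw [← ContinuousLinearMap.adjoint_inner_right] at this
      exact inner_self_eq_zero.mp this
    have := hbound' y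
    rw [h0, norm_zero, mul_zero] at this
    exact norm_le_zero_iff.mp this
  -- build the continuous linear equivalence
  let e : E ≃L[ℂ] E := ContinuousLinearEquiv.ofBijective A
    (LinearMap.ker_eq_bot.mpr hinj) hrange
  refine ⟨e.symm.toContinuousLinearMap, ?_, ?_, ?_⟩
  · ext x
    have : A (e.symm x) = x := e.apply_symm_apply x
    simpa [ContinuousLinearMap.mul_apply] using this
  · ext x
    have : e.symm (A x) = x := e.symm_apply_apply x
    simpa [ContinuousLinearMap.mul_apply] using this
  · apply ContinuousLinearMap.opNorm_le_bound _ (Real.sqrt_nonneg 2)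
    intro x
    have := hbound (e.symm x)
    have hAe : A (e.symm x) = x := e.apply_symm_apply x
    rw [hAe] at this
    exact this
end

section
/- (Cayley's formula with degrees) The number of labelled trees on n vertices {1,...,n} in which vertex v has degree k_v (where each k_v ≥ 1 and ∑_v k_v = 2(n-1)) equals (n-2)! / ∏_v (k_v - 1)!. -/
open scoped Classical

open SimpleGraph Finset Nat
set_option linter.unusedSectionVars false
set_option linter.unusedVariables false
set_option maxHeartbeats 1000000

section Aux

variable {V : Type} [Fintype V] [DecidableEq V]

def restr (G : SimpleGraph V) (v : V) : SimpleGraph {w : V // w ≠ v} :=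
  G.comap (fun w => (w : V))

@[simp] lemma restr_adj (G : SimpleGraph V) (v : V) (a b : {w : V // w ≠ v}) :
    (restr G v).Adj a b ↔ G.Adj a.val b.val := Iff.rfl

def addLeaf (v : V) (u0 : {w : V // w ≠ v}) (H : SimpleGraph {w : V // w ≠ v}) :
    SimpleGraph V where
  Adj a b := (∃ (ha : a ≠ v) (hb : b ≠ v), H.Adj ⟨a, ha⟩ ⟨b, hb⟩) ∨
    (a = v ∧ b = u0.val) ∨ (a = u0.val ∧ b = v)
  symm := by
    constructor
    rintro a b (⟨ha, hb, h⟩ | ⟨rfl, rfl⟩ | ⟨rfl, rfl⟩)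
    · exact Or.inl ⟨hb, ha, h.symm⟩
    · exact Or.inr (Or.inr ⟨rfl, rfl⟩)
    · exact Or.inr (Or.inl ⟨rfl, rfl⟩)
  loopless := by
    constructor
    rintro a (⟨ha, hb, h⟩ | ⟨rfl, h⟩ | ⟨h, rfl⟩)
    · exact H.loopless.irrefl _ h
    · exact u0.2 h.symm
    · exact u0.2 h.symm

lemma addLeaf_adj_v (v : V) (u0 : {w : V // w ≠ v}) (H : SimpleGraph {w : V // w ≠ v})
    (b : V) : (addLeaf v u0 H).Adj v b ↔ b = u0.val := by
  constructor
  · rintro (⟨ha, hb, h⟩ | ⟨_, rfl⟩ | ⟨h, rfl⟩)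
    · exact absurd rfl ha
    · rfl
    · exact absurd h.symm u0.2
  · rintro rfl; exact Or.inr (Or.inl ⟨rfl, rfl⟩)

lemma addLeaf_adj_ne (v : V) (u0 : {w : V // w ≠ v}) (H : SimpleGraph {w : V // w ≠ v})
    {a b : V} (ha : a ≠ v) (hb : b ≠ v) :
    (addLeaf v u0 H).Adj a b ↔ H.Adj ⟨a, ha⟩ ⟨b, hb⟩ := by
  constructor
  · rintro (⟨ha', hb', h⟩ | ⟨rfl, _⟩ | ⟨_, rfl⟩)
    · exact h
    · exact absurd rfl ha
    · exact absurd rfl hb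
  · intro h; exact Or.inl ⟨ha, hb, h⟩

def homUp (v : V) (u0 : {w : V // w ≠ v}) (H : SimpleGraph {w : V // w ≠ v}) :
    H →g addLeaf v u0 H :=
  ⟨fun w => w.val, by
    intro x y h
    exact Or.inl ⟨x.2, y.2, by simpa using h⟩⟩

lemma restr_addLeaf (v : V) (u0 : {w : V // w ≠ v}) (H : SimpleGraph {w : V // w ≠ v}) :
    restr (addLeaf v u0 H) v = H := by
  ext a b
  rw [restr_adj, addLeaf_adj_ne v u0 H a.2 b.2]

lemma addLeaf_restr {G : SimpleGraph V} {v : V} {u0 : {w : V // w ≠ v}}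
    (hvu : ∀ w, G.Adj v w ↔ w = u0.val) :
    addLeaf v u0 (restr G v) = G := by
  ext a b
  constructor
  · rintro (⟨ha, hb, h⟩ | ⟨rfl, rfl⟩ | ⟨rfl, rfl⟩)
    · exact h
    · exact (hvu _).mpr rfl
    · exact ((hvu _).mpr rfl).symm
  · intro h
    by_cases ha : a = v
    · subst ha; exact Or.inr (Or.inl ⟨rfl, (hvu b).mp h⟩)
    by_cases hb : b = v
    · subst hb; exact Or.inr (Or.inr ⟨(hvu a).mp h.symm, rfl⟩)
    · exact Or.inl ⟨ha, hb, h⟩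

lemma addLeaf_degree_v (v : V) (u0 : {w : V // w ≠ v}) (H : SimpleGraph {w : V // w ≠ v}) :
    (addLeaf v u0 H).degree v = 1 := by
  have : (addLeaf v u0 H).neighborFinset v = {u0.val} := by
    ext b
    rw [SimpleGraph.mem_neighborFinset, addLeaf_adj_v, Finset.mem_singleton]
  rw [SimpleGraph.degree, this, Finset.card_singleton]

lemma addLeaf_degree_ne (v : V) (u0 : {w : V // w ≠ v}) (H : SimpleGraph {w : V // w ≠ v})
    {w : V} (hw : w ≠ v) :
    (addLeaf v u0 H).degree w =
      H.degree ⟨w, hw⟩ + (if w = u0.val then 1 else 0) := by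
  have hset : (addLeaf v u0 H).neighborFinset w =
      (H.neighborFinset ⟨w, hw⟩).image (fun x => x.val) ∪
        (if w = u0.val then {v} else ∅) := by
    ext b
    rw [SimpleGraph.mem_neighborFinset, Finset.mem_union, Finset.mem_image]
    constructor
    · rintro (⟨ha', hb', h⟩ | ⟨rfl, rfl⟩ | ⟨h, rfl⟩)
      · exact Or.inl ⟨⟨b, hb'⟩, by rwa [SimpleGraph.mem_neighborFinset], rfl⟩
      · exact absurd rfl hw
      · exact Or.inr (by simp [h])
    · rintro (⟨x, hx, rfl⟩ | hb)
      · rw [SimpleGraph.mem_neighborFinset] at hx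
        exact Or.inl ⟨hw, x.2, by simpa using hx⟩
      · by_cases h : w = u0.val
        · simp only [h, if_true, Finset.mem_singleton] at hb
          subst hb
          exact Or.inr (Or.inr ⟨h ▸ rfl, rfl⟩)
        · simp [h] at hb
  have hdisj : Disjoint ((H.neighborFinset ⟨w, hw⟩).image (fun x => x.val))
      (if w = u0.val then ({v} : Finset V) else ∅) := by
    split
    · rw [Finset.disjoint_singleton_right, Finset.mem_image]
      rintro ⟨x, _, hx⟩
      exact x.2 hx
    · exact Finset.disjoint_empty_right _
  rw [SimpleGraph.degree, hset, Finset.card_union_of_disjoint hdisj,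
    Finset.card_image_of_injective _ Subtype.val_injective]
  congr 1
  split <;> simp
variable {V : Type} [Fintype V] [DecidableEq V]

lemma path_avoid {G : SimpleGraph V} {v u : V} (hvu : ∀ w, G.Adj v w → w = u) :
    ∀ {a b : V} (p : G.Walk a b), p.IsPath → a ≠ v → b ≠ v → v ∉ p.support := by
  intro a b p
  induction p with
  | nil => intro _ ha _; simp [Ne.symm ha]
  | @cons a c b h q ih =>
    intro hp ha hb
    rw [SimpleGraph.Walk.support_cons, List.mem_cons]
    rintro (rfl | hmem)
    · exact ha rfl
    by_cases hc : c = v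
    · subst hc
      obtain ⟨d, hd, r, rfl⟩ := SimpleGraph.Walk.exists_eq_cons_of_ne (Ne.symm hb) q
      have had : a = d := by
        rw [hvu a h.symm, hvu d hd]
      have : a ∈ (SimpleGraph.Walk.cons hd r).support := by
        rw [SimpleGraph.Walk.support_cons, List.mem_cons]
        exact Or.inr (had ▸ r.start_mem_support)
      exact ((SimpleGraph.Walk.cons_isPath_iff _ _).mp hp).2 this
    · exact ih hp.of_cons hc hb hmem

lemma cycle_avoid {G : SimpleGraph V} {v u : V} (hvu : ∀ w, G.Adj v w → w = u)
    {a : V} {c : G.Walk a a} (hc : c.IsCycle) : v ∉ c.support := by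
  intro hv
  have hc' := hc.rotate hv
  set c' := c.rotate v hv with hc'def
  have hnil : ¬ c'.Nil := by
    intro hn
    exact hc'.ne_nil (SimpleGraph.Walk.eq_nil_iff_nil.mpr hn)
  obtain ⟨x, hx, q, hq⟩ := SimpleGraph.Walk.not_nil_iff.mp hnil
  have hxv : x ≠ v := hx.ne'
  obtain ⟨y, hy, r, hr⟩ := SimpleGraph.Walk.exists_eq_cons_of_ne (Ne.symm hxv) q.reverse
  have hyx : y = x := by rw [hvu y hy, hvu x hx]
  subst hyx
  have hmem : s(v, y) ∈ q.edges := by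
    have : s(v, y) ∈ q.reverse.edges := by
      rw [hr, SimpleGraph.Walk.edges_cons]; exact List.mem_cons_self
    rwa [SimpleGraph.Walk.edges_reverse, List.mem_reverse] at this
  have : c'.edges = s(v, y) :: q.edges := by rw [hq, SimpleGraph.Walk.edges_cons]
  have hnd := hc'.edges_nodup
  rw [this] at hnd
  exact (List.nodup_cons.mp hnd).1 hmem

lemma degree_pos_of_connected {G : SimpleGraph V} (hG : G.Connected)
    (h2 : 2 ≤ Fintype.card V) (w : V) : 0 < G.degree w := by
  obtain ⟨x, hx⟩ := Fintype.exists_ne_of_one_lt_card (by omega) w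
  obtain ⟨p⟩ := hG.preconnected w x
  obtain ⟨y, hy, q, rfl⟩ := SimpleGraph.Walk.exists_eq_cons_of_ne (Ne.symm hx) p
  rw [SimpleGraph.degree_pos_iff_exists_adj]
  exact ⟨y, hy⟩
def homOfRestr (G : SimpleGraph V) (v : V) : restr G v →g G :=
  ⟨fun w => w.val, fun h => h⟩

def toRestr {G : SimpleGraph V} {v : V} :
    ∀ {a b : V} (p : G.Walk a b) (ha : a ≠ v) (hb : b ≠ v),
      (∀ w ∈ p.support, w ≠ v) → (restr G v).Walk ⟨a, ha⟩ ⟨b, hb⟩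
  | _, _, SimpleGraph.Walk.nil, _, _, _ => SimpleGraph.Walk.nil
  | _, b, SimpleGraph.Walk.cons (v := c) h q, ha, hb, hs =>
      SimpleGraph.Walk.cons (by exact h)
        (toRestr q (hs c (by simp)) hb (fun w hw => hs w (by simp [hw])))

lemma toRestr_map {G : SimpleGraph V} {v : V} :
    ∀ {a b : V} (p : G.Walk a b) (ha : a ≠ v) (hb : b ≠ v)
      (hs : ∀ w ∈ p.support, w ≠ v),
      (toRestr p ha hb hs).map (homOfRestr G v) = p
  | _, _, SimpleGraph.Walk.nil, _, _, _ => rfl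
  | _, _, SimpleGraph.Walk.cons h q, ha, hb, hs => by
      simp only [toRestr, SimpleGraph.Walk.map_cons]
      exact congrArg _ (toRestr_map q _ _ _)

lemma restr_isTree {G : SimpleGraph V} {v : V} {u0 : {w : V // w ≠ v}}
    (hG : G.IsTree) (hvu : ∀ w, G.Adj v w ↔ w = u0.val) :
    (restr G v).IsTree := by
  refine ⟨{ preconnected := ?_, nonempty := ⟨⟨u0.val, u0.2⟩⟩ }, ?_⟩
  · intro a b
    obtain ⟨p0⟩ := hG.isConnected.preconnected a.val b.val
    set p : G.Path a.val b.val := p0.toPath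
    have havoid : v ∉ p.val.support :=
      path_avoid (fun w h => (hvu w).mp h) p.val p.2 a.2 b.2
    exact ⟨toRestr p.val a.2 b.2 (fun w hw hv => havoid (hv ▸ hw))⟩
  · intro x c hc
    have : (c.map (homOfRestr G v)).IsCycle :=
      (SimpleGraph.Walk.map_isCycle_iff_of_injective
        (by exact Subtype.val_injective)).mpr hc
    exact hG.IsAcyclic _ this

lemma addLeaf_isTree (v : V) (u0 : {w : V // w ≠ v}) {H : SimpleGraph {w : V // w ≠ v}}
    (hH : H.IsTree) : (addLeaf v u0 H).IsTree := by
  have hadjv : (addLeaf v u0 H).Adj v u0.val := (addLeaf_adj_v v u0 H _).mpr rfl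
  refine ⟨{ preconnected := ?_, nonempty := ⟨v⟩ }, ?_⟩
  · have hreach : ∀ a : V, (addLeaf v u0 H).Reachable a u0.val := by
      intro a
      by_cases ha : a = v
      · subst ha; exact ⟨hadjv.toWalk⟩
      · have := hH.isConnected.preconnected ⟨a, ha⟩ u0
        exact this.map (homUp v u0 H)
    intro a b
    exact (hreach a).trans (hreach b).symm
  · intro x c hc
    have hres : (restr (addLeaf v u0 H) v).IsAcyclic := by
      rw [restr_addLeaf]; exact hH.IsAcyclic
    have havoid : v ∉ c.support :=
      cycle_avoid (fun w h => (addLeaf_adj_v v u0 H w).mp h) hc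
    have hx : x ≠ v := fun h => havoid (h ▸ c.start_mem_support)
    have hs : ∀ w ∈ c.support, w ≠ v := fun w hw h => havoid (h ▸ hw)
    have hcyc : (toRestr c hx hx hs).IsCycle := by
      have := toRestr_map c hx hx hs
      rw [← SimpleGraph.Walk.map_isCycle_iff_of_injective
        (f := homOfRestr (addLeaf v u0 H) v) (by exact Subtype.val_injective), this]
      exact hc
    exact hres _ hcyc


lemma exists_nbr {G : SimpleGraph V} {v : V} (h : G.degree v = 1) :
    ∃ u : {w : V // w ≠ v}, ∀ w, G.Adj v w ↔ w = u.val := by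
  obtain ⟨c, hc⟩ := Finset.card_eq_one.mp h
  have hadj : ∀ w, G.Adj v w ↔ w = c := fun w => by
    rw [← SimpleGraph.mem_neighborFinset, hc, Finset.mem_singleton]
  exact ⟨⟨c, fun e => G.loopless.irrefl v (e ▸ (hadj c).mpr rfl)⟩, hadj⟩

noncomputable def theNbr (G : SimpleGraph V) (v : V) (h : G.degree v = 1) :
    {w : V // w ≠ v} := (exists_nbr h).choose

lemma theNbr_adj {G : SimpleGraph V} {v : V} (h : G.degree v = 1) (w : V) :
    G.Adj v w ↔ w = (theNbr G v h).val := (exists_nbr h).choose_spec w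

lemma fiber_card (v : V) (k : V → ℕ) (hk1 : ∀ w, 1 ≤ k w) (hkv : k v = 1)
    (u : {w : V // w ≠ v}) :
    Nat.card {G : SimpleGraph V //
        (G.IsTree ∧ ∀ w, G.degree w = k w) ∧ G.Adj v u.val} =
      Nat.card {H : SimpleGraph {w : V // w ≠ v} // H.IsTree ∧ ∀ w, H.degree w =
        (if w = u then k u.val - 1 else k w.val)} := by
  apply Nat.card_congr
  have keyadj : ∀ (G : SimpleGraph V), (∀ w, G.degree w = k w) → G.Adj v u.val →
      ∀ w, G.Adj v w ↔ w = u.val := by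
    intro G hdeg hadj w
    have h1 : G.degree v = 1 := by rw [hdeg v, hkv]
    rw [theNbr_adj h1]
    have := (theNbr_adj h1 u.val).mp hadj
    rw [← this]
  refine
    { toFun := fun G => ⟨restr G.val v, ?_, ?_⟩
      invFun := fun H => ⟨addLeaf v u H.val, ⟨addLeaf_isTree v u H.2.1, ?_⟩, ?_⟩
      left_inv := ?_
      right_inv := ?_ }
  · exact restr_isTree G.2.1.1 (keyadj G.val G.2.1.2 G.2.2)
  · -- degrees of restriction
    intro w
    have hvu := keyadj G.val G.2.1.2 G.2.2
    have hrt : addLeaf v u (restr G.val v) = G.val := addLeaf_restr hvu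
    have hw := G.2.1.2 w.val
    rw [← hrt, addLeaf_degree_ne v u _ w.2] at hw
    have huw : (⟨w.val, w.2⟩ : {x : V // x ≠ v}) = w := rfl
    rw [huw] at hw
    by_cases h : w = u
    · subst h
      have := hk1 w.val
      rw [if_pos rfl] at hw ⊢
      omega
    · rw [if_neg h]
      rw [if_neg (fun hh : w.val = u.val => h (Subtype.ext hh))] at hw
      omega
  · -- degrees of addLeaf
    intro w
    by_cases hwv : w = v
    · subst hwv; rw [addLeaf_degree_v, hkv]
    · rw [addLeaf_degree_ne v u H.val hwv]
      have hdH := H.2.2 ⟨w, hwv⟩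
      rw [hdH]
      by_cases h : w = u.val
      · rw [if_pos h, if_pos (Subtype.ext h)]
        have := hk1 u.val
        rw [h]
        omega
      · rw [if_neg (fun hh : (⟨w, hwv⟩ : {x : V // x ≠ v}) = u => h (congrArg Subtype.val hh)),
          if_neg h]
        simp
  · exact (addLeaf_adj_v v u H.val u.val).mpr rfl
  · intro G
    exact Subtype.ext (addLeaf_restr (keyadj G.val G.2.1.2 G.2.2))
  · intro H
    exact Subtype.ext (restr_addLeaf v u H.val)


lemma two_elt_tree_unique {G : SimpleGraph V} (hG : G.IsTree) {a b : V}
    (hab : a ≠ b) (hall : ∀ z : V, z = a ∨ z = b) {x y : V} :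
    G.Adj x y ↔ x ≠ y := by
  constructor
  · exact fun h => h.ne
  · intro hxy
    obtain ⟨p⟩ := hG.isConnected.preconnected x y
    obtain ⟨c, hc, r, rfl⟩ := SimpleGraph.Walk.exists_eq_cons_of_ne hxy p
    have hcx := hc.ne
    have hcy : c = y := by
      rcases hall c with rfl | rfl <;> rcases hall x with rfl | rfl <;>
        rcases hall y with rfl | rfl <;> simp_all
    exact hcy ▸ hc

lemma tree_count : ∀ (N : ℕ), 2 ≤ N → ∀ (V : Type) [Fintype V] [DecidableEq V],
    Fintype.card V = N → ∀ (k : V → ℕ), (∀ w, 1 ≤ k w) → ∑ w, k w = 2 * (N - 1) →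
    Nat.card {G : SimpleGraph V // G.IsTree ∧ ∀ w, G.degree w = k w} *
      ∏ w, (k w - 1)! = (N - 2)! := by
  intro N hN
  induction N, hN using Nat.le_induction with
  | base =>
    intro V _ _ hcard k hk1 hksum
    obtain ⟨a, b, hab, huniv⟩ := Finset.card_eq_two.mp
      (by rw [Finset.card_univ, hcard] : (Finset.univ : Finset V).card = 2)
    have hall : ∀ z : V, z = a ∨ z = b := fun z => by
      have := Finset.mem_univ z
      rw [huniv] at this
      simpa using this
    have hsum2 : k a + k b = 2 := by
      have : ∑ w, k w = k a + k b := by rw [huniv, Finset.sum_pair hab]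
      omega
    have hkall : ∀ z : V, k z = 1 := by
      intro z
      have h1 := hk1 a
      have h2 := hk1 b
      rcases hall z with rfl | rfl <;> omega
    have hprod : ∏ w, (k w - 1)! = 1 := by
      simp [hkall]
    have hacyc : ∀ (G : SimpleGraph V), G.IsAcyclic := by
      intro G x c hc
      have h3 := hc.three_le_length
      have hnd : c.support.tail.Nodup := hc.2
      have hlen : c.support.tail.length ≤ 2 := by
        have := hnd.length_le_card
        rwa [hcard] at this
      have : c.support.length = c.length + 1 := c.length_support
      have : c.support.tail.length = c.length := by
        rw [List.length_tail, this]
        omega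
      omega
    have hne : Nonempty {G : SimpleGraph V // G.IsTree ∧ ∀ w, G.degree w = k w} := by
      refine ⟨⟨⊤, ⟨@SimpleGraph.connected_top V ⟨a⟩, hacyc ⊤⟩, ?_⟩⟩
      intro w
      rw [hkall]
      have h := SimpleGraph.complete_graph_degree (V := V) w
      rw [hcard] at h
      convert h using 2 <;> exact Subsingleton.elim _ _
    have hsub : Subsingleton {G : SimpleGraph V // G.IsTree ∧ ∀ w, G.degree w = k w} := by
      constructor
      rintro ⟨G, hG, _⟩ ⟨G', hG', _⟩
      apply Subtype.ext
      ext x y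
      rw [two_elt_tree_unique hG hab hall, two_elt_tree_unique hG' hab hall]
    rw [Nat.card_eq_one_iff_unique.mpr ⟨hsub, hne⟩, hprod]
    decide
  | succ N hN IH =>
    intro V _ _ hcard k hk1 hksum
    rw [Nat.add_sub_cancel] at hksum
    -- find a leaf
    have hex : ∃ v, k v = 1 := by
      by_contra h
      push_neg at h
      have h2 : ∀ w, 2 ≤ k w := fun w => by have := hk1 w; have := h w; omega
      have hle : 2 * (N + 1) ≤ ∑ w, k w := by
        calc 2 * (N + 1) = ∑ _w : V, 2 := by
              rw [Finset.sum_const, Finset.card_univ, hcard]; ring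
          _ ≤ ∑ w, k w := Finset.sum_le_sum (fun w _ => h2 w)
      omega
    obtain ⟨v, hkv⟩ := hex
    have hcard' : Fintype.card {w : V // w ≠ v} = N := by
      simp [Fintype.card_subtype_compl, hcard]
    -- sum over the subtype
    have hsubsum : ∑ w : {w : V // w ≠ v}, k w.val = 2 * N - 1 := by
      have h1 : ∑ x ∈ Finset.univ.erase v, k x = ∑ w : {w : V // w ≠ v}, k w.val := by
        exact Finset.sum_subtype _ (fun x => by simp) k
      have h2 : k v + ∑ x ∈ Finset.univ.erase v, k x = ∑ w, k w :=
        Finset.add_sum_erase Finset.univ k (Finset.mem_univ v)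
      omega
    -- product over the subtype
    have hsubprod : ∏ w : V, (k w - 1)! = ∏ w : {w : V // w ≠ v}, (k w.val - 1)! := by
      have h1 : ∏ x ∈ Finset.univ.erase v, (k x - 1)! =
          ∏ w : {w : V // w ≠ v}, (k w.val - 1)! :=
        Finset.prod_subtype _ (fun x => by simp) _
      have h2 : (k v - 1)! * ∏ x ∈ Finset.univ.erase v, (k x - 1)! = ∏ w, (k w - 1)! :=
        Finset.mul_prod_erase Finset.univ (fun x => (k x - 1)!) (Finset.mem_univ v)
      rw [← h2, h1, hkv]
      simp
    -- the degree-1 condition at v for members of the tree set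
    have hdeg1 : ∀ G : {G : SimpleGraph V // G.IsTree ∧ ∀ w, G.degree w = k w},
        G.val.degree v = 1 := fun G => by rw [G.2.2 v, hkv]
    set T := {G : SimpleGraph V // G.IsTree ∧ ∀ w, G.degree w = k w} with hT
    let f : T → {w : V // w ≠ v} := fun G => theNbr G.val v (hdeg1 G)
    haveI : Fintype T := Fintype.ofFinite _
    -- decomposition over the neighbor of v
    have hdecomp : Nat.card T = ∑ u : {w : V // w ≠ v}, Nat.card {G : T // f G = u} := by
      rw [Nat.card_eq_fintype_card, ← Fintype.card_congr (Equiv.sigmaFiberEquiv f),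
        Fintype.card_sigma]
      exact Finset.sum_congr rfl (fun u _ => Nat.card_eq_fintype_card.symm)
    -- each fiber is the set of trees with v attached to u
    have hfiber : ∀ u : {w : V // w ≠ v}, Nat.card {G : T // f G = u} =
        Nat.card {G : SimpleGraph V //
          (G.IsTree ∧ ∀ w, G.degree w = k w) ∧ G.Adj v u.val} := by
      intro u
      apply Nat.card_congr
      refine
        { toFun := fun G => ⟨G.val.val, G.val.2, ?_⟩
          invFun := fun G => ⟨⟨G.val, G.2.1⟩, ?_⟩
          left_inv := fun G => Subtype.ext (Subtype.ext rfl)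
          right_inv := fun G => Subtype.ext rfl }
      · have h2 : f G.val = u := G.2
        simp only [f] at h2
        have h3 := (theNbr_adj (hdeg1 G.val)
          (theNbr G.val.val v (hdeg1 G.val)).val).mpr rfl
        rw [h2] at h3
        exact h3
      · show theNbr G.val v _ = u
        exact Subtype.ext ((theNbr_adj _ u.val).mp G.2.2).symm
    -- evaluation of each term
    have hterm : ∀ u : {w : V // w ≠ v},
        Nat.card {G : SimpleGraph V //
            (G.IsTree ∧ ∀ w, G.degree w = k w) ∧ G.Adj v u.val} *
          ∏ w : {w : V // w ≠ v}, (k w.val - 1)! = (k u.val - 1) * (N - 2)! := by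
      intro u
      rw [fiber_card v k hk1 hkv u]
      by_cases hku : k u.val = 1
      · have hempty : IsEmpty {H : SimpleGraph {w : V // w ≠ v} // H.IsTree ∧
            ∀ w, H.degree w = (if w = u then k u.val - 1 else k w.val)} := by
          constructor
          rintro ⟨H, hH, hd⟩
          have hdu := hd u
          rw [if_pos rfl, hku] at hdu
          have hpos := degree_pos_of_connected hH.isConnected
            (by rw [hcard']; omega) u
          omega
        rw [Nat.card_of_isEmpty, hku]
        simp
      · have hku2 : 2 ≤ k u.val := by have := hk1 u.val; omega
        -- apply the induction hypothesis with modified degrees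
        have hk1' : ∀ w : {w : V // w ≠ v},
            1 ≤ (if w = u then k u.val - 1 else k w.val) := by
          intro w
          split
          · omega
          · exact hk1 w.val
        have herase_sum : k u.val + ∑ x ∈ Finset.univ.erase u, k x.val =
            ∑ w : {w : V // w ≠ v}, k w.val :=
          Finset.add_sum_erase Finset.univ (fun x => k x.val) (Finset.mem_univ u)
        have hsum' : ∑ w : {w : V // w ≠ v},
            (if w = u then k u.val - 1 else k w.val) = 2 * (N - 1) := by
          have h1 : (if u = u then k u.val - 1 else k u.val) +
              ∑ x ∈ Finset.univ.erase u, (if x = u then k u.val - 1 else k x.val) =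
              ∑ w : {w : V // w ≠ v}, (if w = u then k u.val - 1 else k w.val) :=
            Finset.add_sum_erase Finset.univ
              (fun x => if x = u then k u.val - 1 else k x.val) (Finset.mem_univ u)
          have h2 : ∑ x ∈ Finset.univ.erase u, (if x = u then k u.val - 1 else k x.val) =
              ∑ x ∈ Finset.univ.erase u, k x.val :=
            Finset.sum_congr rfl (fun x hx => by
              rw [if_neg (Finset.ne_of_mem_erase hx)])
          rw [if_pos rfl, h2] at h1
          omega
        have hIH := IH {w : V // w ≠ v} hcard'
          (fun w => if w = u then k u.val - 1 else k w.val) hk1' hsum'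
        -- relate the two products
        have hprodrel : ∏ w : {w : V // w ≠ v}, (k w.val - 1)! =
            (k u.val - 1) * ∏ w : {w : V // w ≠ v},
              ((if w = u then k u.val - 1 else k w.val) - 1)! := by
          have e1 : (k u.val - 1)! * ∏ x ∈ Finset.univ.erase u, (k x.val - 1)! =
              ∏ w : {w : V // w ≠ v}, (k w.val - 1)! :=
            Finset.mul_prod_erase Finset.univ (fun x => (k x.val - 1)!)
              (Finset.mem_univ u)
          have e2 : ((if u = u then k u.val - 1 else k u.val) - 1)! *
              ∏ x ∈ Finset.univ.erase u, ((if x = u then k u.val - 1 else k x.val) - 1)! =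
              ∏ w : {w : V // w ≠ v}, ((if w = u then k u.val - 1 else k w.val) - 1)! :=
            Finset.mul_prod_erase Finset.univ
              (fun x => ((if x = u then k u.val - 1 else k x.val) - 1)!)
              (Finset.mem_univ u)
          have e4 : ∏ x ∈ Finset.univ.erase u, ((if x = u then k u.val - 1 else k x.val) - 1)! =
              ∏ x ∈ Finset.univ.erase u, (k x.val - 1)! :=
            Finset.prod_congr rfl (fun x hx => by
              rw [if_neg (Finset.ne_of_mem_erase hx)])
          have e5 : (k u.val - 1)! = (k u.val - 1) * (k u.val - 2)! := by
            have : k u.val - 1 = (k u.val - 2) + 1 := by omega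
            rw [this, Nat.factorial_succ, ← this]
          have e6 : (if u = u then k u.val - 1 else k u.val) - 1 = k u.val - 2 := by
            rw [if_pos rfl]
            omega
          rw [← e1, ← e2, e4, e5, e6]
          ring
        rw [hprodrel, mul_left_comm]
        congr 1
    -- assemble
    have hsum_deg : ∑ u : {w : V // w ≠ v}, (k u.val - 1) = N - 1 := by
      have h1 : ∑ u : {w : V // w ≠ v}, ((k u.val - 1) + 1) =
          ∑ u : {w : V // w ≠ v}, k u.val :=
        Finset.sum_congr rfl (fun u _ => by have := hk1 u.val; omega)
      rw [Finset.sum_add_distrib, Finset.sum_const, Finset.card_univ, hcard'] at h1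
      simp only [smul_eq_mul, mul_one] at h1
      omega
    rw [hsubprod, hdecomp, Finset.sum_mul]
    have : ∀ u ∈ (Finset.univ : Finset {w : V // w ≠ v}),
        Nat.card {G : T // f G = u} * ∏ w : {w : V // w ≠ v}, (k w.val - 1)! =
          (k u.val - 1) * (N - 2)! := fun u _ => by rw [hfiber u]; exact hterm u
    rw [Finset.sum_congr rfl this, ← Finset.sum_mul, hsum_deg]
    have : N + 1 - 2 = (N - 2) + 1 := by omega
    rw [this, Nat.factorial_succ]
    congr 1

end Aux

/-- Cayley's formula with prescribed degrees: the number of labelled trees on `n ≥ 2`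
vertices in which vertex `v` has degree `k v` (with all `k v ≥ 1` and `∑ k v = 2(n-1)`)
is `(n-2)! / ∏_v (k v - 1)!`. -/
theorem cayley_with_degrees (n : ℕ) (hn : 2 ≤ n) (k : Fin n → ℕ)
    (hk1 : ∀ v, 1 ≤ k v) (hk : ∑ v, k v = 2 * (n - 1)) :
    Nat.card {G : SimpleGraph (Fin n) // G.IsTree ∧ ∀ v, G.degree v = k v} =
      Nat.factorial (n - 2) / ∏ v, Nat.factorial (k v - 1) := by
  have h := tree_count n hn (Fin n) (Fintype.card_fin n) k hk1 hk
  have hpos : 0 < ∏ v, (k v - 1)! := Finset.prod_pos (fun v _ => Nat.factorial_pos _)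
  exact (Nat.div_eq_of_eq_mul_left hpos h.symm).symm
end

section
/- Let Γ : ℝ⁴ × ℝ⁴ → [0,∞) be a bounded measurable function satisfying the Fredholm-type inequality Γ(x,y) ≤ A(e^{-c|x-y|} + ε ∫ e^{-c|x-z|} Γ(z,y) dz) for all x,y, where A, c > 0 and ε ≥ 0. If ε is small enough (specifically ε A ∫ e^{-c|u|} du < 1 and the iteration can be closed with a slightly smaller decay rate c' < c), then there is a constant K such that Γ(x,y) ≤ K A e^{-c'|x-y|} for all x, y. -/
open MeasureTheory Real

lemma integrable_exp_neg_mul_norm_E4 {b : ℝ} (hb : 0 < b) :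
    Integrable (fun u : EuclideanSpace ℝ (Fin 4) => Real.exp (-b * ‖u‖)) := by
  set M : ℝ := max 1 (5 / b) with hM
  have hM1 : (1:ℝ) ≤ M := le_max_left _ _
  have key : ∀ r : ℝ, 0 ≤ r → Real.exp (-b * r) ≤ M ^ 5 * ((1 + r) ^ (-(5:ℝ))) := by
    intro r hr
    have h1r : (0:ℝ) < 1 + r := by linarith
    have step : 1 + r ≤ M * Real.exp (b * r / 5) := by
      have hexp : 1 + b * r / 5 ≤ Real.exp (b * r / 5) := by
        have := Real.add_one_le_exp (b * r / 5); linarith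
      have hbr : 0 ≤ b * r / 5 := by positivity
      have hMB : 5 / b ≤ M := le_max_right _ _
      have h2 : r ≤ M * (b * r / 5) := by
        have := mul_le_mul_of_nonneg_right hMB hbr
        calc r = (5 / b) * (b * r / 5) := by field_simp
          _ ≤ M * (b * r / 5) := this
      nlinarith [mul_le_mul_of_nonneg_left hexp (by linarith : (0:ℝ) ≤ M)]
    have pow5 : (1 + r) ^ (5:ℕ) ≤ M ^ 5 * Real.exp (b * r) := by
      have h := pow_le_pow_left₀ (by linarith) step 5
      calc (1+r)^(5:ℕ) ≤ (M * Real.exp (b*r/5))^(5:ℕ) := h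
        _ = M ^ 5 * Real.exp (b*r/5) ^ (5:ℕ) := by ring
        _ = M ^ 5 * Real.exp (b * r) := by
            rw [← Real.exp_nat_mul]; ring_nf
    have h5 : (0:ℝ) < (1+r)^(5:ℕ) := by positivity
    have hE : (0:ℝ) < Real.exp (b*r) := Real.exp_pos _
    have hrp : (1 + r) ^ (-(5:ℝ)) = ((1 + r) ^ (5:ℕ))⁻¹ := by
      rw [Real.rpow_neg h1r.le, show ((5:ℝ)) = ((5:ℕ):ℝ) by norm_num, Real.rpow_natCast]
    rw [hrp, neg_mul, Real.exp_neg]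
    have goal2 : (Real.exp (b*r))⁻¹ * ((1+r)^(5:ℕ)) ≤ M^5 := by
      rw [inv_mul_eq_div, div_le_iff₀ hE]; linarith [pow5]
    calc (Real.exp (b*r))⁻¹
        = ((Real.exp (b*r))⁻¹ * (1+r)^(5:ℕ)) * ((1+r)^(5:ℕ))⁻¹ := by
          field_simp
      _ ≤ M^5 * ((1+r)^(5:ℕ))⁻¹ := mul_le_mul_of_nonneg_right goal2 (by positivity)
  have base : Integrable (fun u : EuclideanSpace ℝ (Fin 4) => M ^ 5 * (1 + ‖u‖) ^ (-(5:ℝ))) := by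
    refine (integrable_one_add_norm ?_).const_mul _
    simp only [finrank_euclideanSpace_fin]; norm_num
  refine base.mono' ?_ ?_
  · exact (Real.continuous_exp.comp (continuous_const.mul continuous_norm)).aestronglyMeasurable
  · filter_upwards with u
    rw [Real.norm_eq_abs, abs_of_pos (Real.exp_pos _)]
    exact key ‖u‖ (norm_nonneg u)

set_option maxHeartbeats 2000000 in
/-- Exponential decay from a Fredholm-type integral inequality: if a bounded measurable
nonnegative kernel `Γ` on `ℝ⁴ × ℝ⁴` satisfies
`Γ(x,y) ≤ A (e^{-c|x-y|} + ε ∫ e^{-c|x-z|} Γ(z,y) dz)` and `ε` is small enough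
(depending on `A`, `c` and a rate `0 < c' < c`), then `Γ(x,y) ≤ K A e^{-c'|x-y|}`. -/
theorem fredholm_inequality_decay
    (A c c' : ℝ) (hA : 0 < A) (hc' : 0 < c') (hcc : c' < c) :
    ∃ ε₀ : ℝ, 0 < ε₀ ∧
      ∀ (Γ : EuclideanSpace ℝ (Fin 4) → EuclideanSpace ℝ (Fin 4) → ℝ)
        (_ : Measurable (Function.uncurry Γ))
        (_ : ∀ x y, 0 ≤ Γ x y) (B : ℝ) (_ : ∀ x y, Γ x y ≤ B)
        (ε : ℝ) (_ : 0 ≤ ε) (_ : ε < ε₀),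
        (∀ x y, Γ x y ≤
            A * (Real.exp (-c * ‖x - y‖) +
              ε * ∫ z, Real.exp (-c * ‖x - z‖) * Γ z y)) →
        ∃ K : ℝ, ∀ x y, Γ x y ≤ K * A * Real.exp (-c' * ‖x - y‖) := by
  have hc : 0 < c := hc'.trans hcc
  have hcc0 : 0 < c - c' := by linarith
  set I₀ : ℝ := ∫ u : EuclideanSpace ℝ (Fin 4), Real.exp (-c * ‖u‖) with hI₀def
  set J : ℝ := ∫ u : EuclideanSpace ℝ (Fin 4), Real.exp (-(c - c') * ‖u‖) with hJdef
  have hI₀ : 0 ≤ I₀ := integral_nonneg fun u => (Real.exp_pos _).le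
  have hJ : 0 ≤ J := integral_nonneg fun u => (Real.exp_pos _).le
  have hintc : Integrable (fun u : EuclideanSpace ℝ (Fin 4) => Real.exp (-c * ‖u‖)) :=
    integrable_exp_neg_mul_norm_E4 hc
  have hintcc : Integrable (fun u : EuclideanSpace ℝ (Fin 4) => Real.exp (-(c - c') * ‖u‖)) :=
    integrable_exp_neg_mul_norm_E4 hcc0
  have hD : 0 < A * (I₀ + J) + 1 := by positivity
  refine ⟨(A * (I₀ + J) + 1)⁻¹, inv_pos.mpr hD, ?_⟩
  intro Γ hmeas hΓ0 B hB ε hε hεlt hfred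
  have hεD : ε * (A * (I₀ + J) + 1) < 1 := by
    have := mul_lt_mul_of_pos_right hεlt hD
    rwa [inv_mul_cancel₀ hD.ne'] at this
  have hqI : A * ε * I₀ < 1 := by nlinarith [mul_nonneg hε (mul_nonneg hA.le hJ)]
  have hqJ : A * ε * J < 1 := by nlinarith [mul_nonneg hε (mul_nonneg hA.le hI₀)]
  have hqI0 : 0 ≤ A * ε * I₀ := by positivity
  have hqJ0 : 0 ≤ A * ε * J := by positivity
  have hB0 : 0 ≤ B := (hΓ0 0 0).trans (hB 0 0)
  -- main induction
  have main : ∀ n : ℕ, ∀ x y, Γ x y ≤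
      A * (∑ k ∈ Finset.range n, (A * ε * J) ^ k) * Real.exp (-c' * ‖x - y‖)
        + (A * ε * I₀) ^ n * B := by
    intro n
    induction n with
    | zero => intro x y; simpa using hB x y
    | succ n ih =>
      intro x y
      set Sn : ℝ := ∑ k ∈ Finset.range n, (A * ε * J) ^ k with hSn
      set Tn : ℝ := (A * ε * I₀) ^ n * B with hTn
      have hSn0 : 0 ≤ Sn := Finset.sum_nonneg fun k _ => pow_nonneg hqJ0 k
      have hTn0 : 0 ≤ Tn := mul_nonneg (pow_nonneg hqI0 n) hB0
      -- integrability of translates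
      have hint1 : Integrable (fun z : EuclideanSpace ℝ (Fin 4) => Real.exp (-c * ‖x - z‖)) :=
        hintc.comp_sub_left x
      have hint2 : Integrable (fun z : EuclideanSpace ℝ (Fin 4) =>
          Real.exp (-c * ‖x - z‖) * Real.exp (-c' * ‖z - y‖)) := by
        refine hint1.mono' ?_ ?_
        · exact ((Real.continuous_exp.comp
              ((continuous_const.sub continuous_id).norm.const_smul (-c))).mul
            (Real.continuous_exp.comp
              ((continuous_id.sub continuous_const).norm.const_smul (-c')))).aestronglyMeasurable
        · filter_upwards with z
          rw [Real.norm_eq_abs, abs_of_pos (by positivity)]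
          have : Real.exp (-c' * ‖z - y‖) ≤ 1 := by
            rw [Real.exp_le_one_iff]
            have : 0 ≤ ‖z - y‖ := norm_nonneg _
            nlinarith
          nlinarith [Real.exp_pos (-c * ‖x - z‖), Real.exp_pos (-c' * ‖z - y‖)]
      -- the convolution bound
      have hconv : (∫ z, Real.exp (-c * ‖x - z‖) * Real.exp (-c' * ‖z - y‖))
          ≤ J * Real.exp (-c' * ‖x - y‖) := by
        have hptwise : ∀ z : EuclideanSpace ℝ (Fin 4),
            Real.exp (-c * ‖x - z‖) * Real.exp (-c' * ‖z - y‖)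
              ≤ Real.exp (-(c - c') * ‖x - z‖) * Real.exp (-c' * ‖x - y‖) := by
          intro z
          rw [← Real.exp_add, ← Real.exp_add, Real.exp_le_exp]
          have htri : ‖x - y‖ ≤ ‖x - z‖ + ‖z - y‖ := by
            have := norm_sub_le_norm_sub_add_norm_sub x z y
            linarith
          nlinarith [norm_nonneg (x - z)]
        have hint3 : Integrable (fun z : EuclideanSpace ℝ (Fin 4) =>
            Real.exp (-(c - c') * ‖x - z‖) * Real.exp (-c' * ‖x - y‖)) :=
          (hintcc.comp_sub_left x).mul_const _
        calc (∫ z, Real.exp (-c * ‖x - z‖) * Real.exp (-c' * ‖z - y‖))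
            ≤ ∫ z, Real.exp (-(c - c') * ‖x - z‖) * Real.exp (-c' * ‖x - y‖) := by
              refine integral_mono_of_nonneg ?_ hint3 ?_
              · filter_upwards with z; positivity
              · filter_upwards with z; exact hptwise z
          _ = (∫ z, Real.exp (-(c - c') * ‖x - z‖)) * Real.exp (-c' * ‖x - y‖) :=
              integral_mul_const _ _
          _ = J * Real.exp (-c' * ‖x - y‖) := by
              rw [hJdef]
              congr 1
              exact integral_sub_left_eq_self
                (fun u : EuclideanSpace ℝ (Fin 4) => Real.exp (-(c - c') * ‖u‖)) volume x
      have hI₀eq : (∫ z, Real.exp (-c * ‖x - z‖)) = I₀ := by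
        rw [hI₀def]
        exact integral_sub_left_eq_self
          (fun u : EuclideanSpace ℝ (Fin 4) => Real.exp (-c * ‖u‖)) volume x
      -- bound the integral term
      have hIval : (∫ z, Real.exp (-c * ‖x - z‖) * Γ z y)
          ≤ A * Sn * (J * Real.exp (-c' * ‖x - y‖)) + Tn * I₀ := by
        have hgint : Integrable (fun z : EuclideanSpace ℝ (Fin 4) =>
            A * Sn * (Real.exp (-c * ‖x - z‖) * Real.exp (-c' * ‖z - y‖))
              + Tn * Real.exp (-c * ‖x - z‖)) :=
          (hint2.const_mul _).add (hint1.const_mul _)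
        calc (∫ z, Real.exp (-c * ‖x - z‖) * Γ z y)
            ≤ ∫ z, (A * Sn * (Real.exp (-c * ‖x - z‖) * Real.exp (-c' * ‖z - y‖))
                + Tn * Real.exp (-c * ‖x - z‖)) := by
              refine integral_mono_of_nonneg ?_ hgint ?_
              · filter_upwards with z
                exact mul_nonneg (Real.exp_pos _).le (hΓ0 z y)
              · filter_upwards with z
                have h := ih z y
                have hexp0 : (0:ℝ) < Real.exp (-c * ‖x - z‖) := Real.exp_pos _
                have := mul_le_mul_of_nonneg_left h hexp0.le
                calc Real.exp (-c * ‖x - z‖) * Γ z y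
                    ≤ Real.exp (-c * ‖x - z‖) * (A * Sn * Real.exp (-c' * ‖z - y‖) + Tn) := this
                  _ = A * Sn * (Real.exp (-c * ‖x - z‖) * Real.exp (-c' * ‖z - y‖))
                      + Tn * Real.exp (-c * ‖x - z‖) := by ring
          _ = A * Sn * (∫ z, Real.exp (-c * ‖x - z‖) * Real.exp (-c' * ‖z - y‖))
              + Tn * (∫ z, Real.exp (-c * ‖x - z‖)) := by
              rw [integral_add (hint2.const_mul _) (hint1.const_mul _),
                integral_const_mul, integral_const_mul]
          _ ≤ A * Sn * (J * Real.exp (-c' * ‖x - y‖)) + Tn * I₀ := by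
              rw [hI₀eq]
              have := mul_le_mul_of_nonneg_left hconv (by positivity : (0:ℝ) ≤ A * Sn)
              linarith
      have hec : Real.exp (-c * ‖x - y‖) ≤ Real.exp (-c' * ‖x - y‖) := by
        rw [Real.exp_le_exp]
        nlinarith [norm_nonneg (x - y)]
      have hfx := hfred x y
      rw [geom_sum_succ, pow_succ', ← hSn]
      have hεnn : 0 ≤ ε := hε
      have he'0 : 0 < Real.exp (-c' * ‖x - y‖) := Real.exp_pos _
      have hstep : Γ x y ≤ A * (Real.exp (-c' * ‖x - y‖)
          + ε * (A * Sn * (J * Real.exp (-c' * ‖x - y‖)) + Tn * I₀)) := by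
        have h1 := mul_le_mul_of_nonneg_left hIval hεnn
        nlinarith
      calc Γ x y ≤ A * (Real.exp (-c' * ‖x - y‖)
            + ε * (A * Sn * (J * Real.exp (-c' * ‖x - y‖)) + Tn * I₀)) := hstep
        _ = A * (A * ε * J * Sn + 1) * Real.exp (-c' * ‖x - y‖)
            + A * ε * I₀ * (A * ε * I₀) ^ n * B := by rw [hTn]; ring
  -- pass to the limit
  set q : ℝ := A * ε * J with hq
  set K : ℝ := (1 - q)⁻¹ with hK
  refine ⟨K, fun x y => ?_⟩
  have hSle : ∀ n : ℕ, (∑ k ∈ Finset.range n, q ^ k) ≤ K := by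
    intro n
    have hsum : (∑ k ∈ Finset.range n, q ^ k) ≤ ∑' k : ℕ, q ^ k :=
      (summable_geometric_of_lt_one hqJ0 hqJ).sum_le_tsum _ (fun k _ => pow_nonneg hqJ0 k)
    rwa [tsum_geometric_of_lt_one hqJ0 hqJ] at hsum
  have he'0 : 0 < Real.exp (-c' * ‖x - y‖) := Real.exp_pos _
  have hbound : ∀ n : ℕ, Γ x y ≤ K * A * Real.exp (-c' * ‖x - y‖) + (A * ε * I₀) ^ n * B := by
    intro n
    have h := main n x y
    have := mul_le_mul_of_nonneg_right
      (mul_le_mul_of_nonneg_left (hSle n) hA.le) he'0.le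
    calc Γ x y ≤ A * (∑ k ∈ Finset.range n, q ^ k) * Real.exp (-c' * ‖x - y‖)
          + (A * ε * I₀) ^ n * B := h
      _ ≤ A * K * Real.exp (-c' * ‖x - y‖) + (A * ε * I₀) ^ n * B := by linarith
      _ = K * A * Real.exp (-c' * ‖x - y‖) + (A * ε * I₀) ^ n * B := by ring
  have hT : Filter.Tendsto (fun n : ℕ => K * A * Real.exp (-c' * ‖x - y‖) + (A * ε * I₀) ^ n * B)
      Filter.atTop (nhds (K * A * Real.exp (-c' * ‖x - y‖))) := by
    have h0 : Filter.Tendsto (fun n : ℕ => (A * ε * I₀) ^ n * B) Filter.atTop (nhds 0) := by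
      have := (tendsto_pow_atTop_nhds_zero_of_lt_one hqI0 hqI).mul_const B
      simpa using this
    simpa using (tendsto_const_nhds.add h0)
  exact ge_of_tendsto' hT hbound
end

section
/- Let T be a tree on vertex set {1,...,n} and for each edge ℓ of T let w_ℓ ∈ [0,1]. Define the n×n matrix W by W(v,v) = 1 and, for v ≠ v', W(v,v') = min over edges ℓ on the unique path in T from v to v' of w_ℓ. Then W is a positive semidefinite matrix. -/
open scoped Classical
open Matrix

section auxx
private lemma aux_foldr_min_le {l : List ℝ} {a : ℝ} (ha : a ∈ l) : l.foldr min 1 ≤ a := by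
  induction l with
  | nil => simp at ha
  | cons b l ih =>
    rcases List.mem_cons.1 ha with rfl | h
    · exact min_le_left _ _
    · exact le_trans (min_le_right _ _) (ih h)

private lemma aux_le_foldr_min {l : List ℝ} {t : ℝ} (h1 : t ≤ 1) (h : ∀ a ∈ l, t ≤ a) :
    t ≤ l.foldr min 1 := by
  induction l with
  | nil => simpa
  | cons b l ih =>
    exact le_min (h b (by simp)) (ih fun a ha => h a (List.mem_cons_of_mem _ ha))

private lemma aux_foldr_min_le_one (l : List ℝ) : l.foldr min 1 ≤ 1 := by
  induction l with
  | nil => simp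
  | cons b l ih => exact le_trans (min_le_right _ _) ih

private lemma aux_integral_ind {m : ℝ} (h0 : 0 ≤ m) (h1 : m ≤ 1) :
    ∫ t in (0:ℝ)..1, (if t ≤ m then (1:ℝ) else 0) = m := by
  have hfun : (fun t : ℝ => if t ≤ m then (1:ℝ) else 0)
      = Set.indicator (Set.Iic m) (fun _ => (1:ℝ)) := by
    funext t
    by_cases ht : t ≤ m <;> simp [Set.indicator, ht]
  rw [intervalIntegral.integral_of_le (by norm_num : (0:ℝ) ≤ 1), hfun,
    MeasureTheory.setIntegral_indicator measurableSet_Iic]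
  have : Set.Ioc (0:ℝ) 1 ∩ Set.Iic m = Set.Ioc 0 m := by
    ext t
    simp only [Set.mem_inter_iff, Set.mem_Iic, Set.mem_Ioc]
    constructor
    · rintro ⟨⟨h2, _⟩, h⟩; exact ⟨h2, h⟩
    · rintro ⟨h2, h⟩; exact ⟨⟨h2, h.trans h1⟩, h⟩
  rw [this]
  simp [Real.volume_Ioc, ENNReal.toReal_ofReal h0, h0]

private lemma aux_reach_posSemidef {V : Type*} [Fintype V] (G : SimpleGraph V) :
    (Matrix.of fun v v' => if G.Reachable v v' then (1:ℝ) else 0).PosSemidef := by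
  classical
  haveI : Fintype G.ConnectedComponent := Fintype.ofFinite _
  let B : Matrix G.ConnectedComponent V ℝ :=
    Matrix.of fun c v => if G.connectedComponentMk v = c then 1 else 0
  have hM : (Matrix.of fun v v' => if G.Reachable v v' then (1:ℝ) else 0)
      = B.conjTranspose * B := by
    ext v v'
    simp only [Matrix.mul_apply, Matrix.conjTranspose_apply, Matrix.of_apply, B, star_trivial,
      ite_mul, one_mul, zero_mul]
    rw [Finset.sum_ite_eq (Finset.univ) (G.connectedComponentMk v)
      (fun c => if G.connectedComponentMk v' = c then (1:ℝ) else 0)]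
    simp only [Finset.mem_univ, if_true]
    by_cases h : G.Reachable v v'
    · rw [if_pos h, if_pos (SimpleGraph.ConnectedComponent.eq.2 h.symm)]
    · rw [if_neg h, if_neg]
      intro hc
      exact h (SimpleGraph.ConnectedComponent.eq.1 hc).symm
  rw [hM]
  exact Matrix.posSemidef_conjTranspose_mul_self B
end auxx



/-- Positivity of the forest-formula covariance: let `T` be a tree on `n` vertices with
interpolation parameters `w_ℓ ∈ [0,1]` on its edges, and let `W` be the matrix with
`W v v = 1` and, for `v ≠ v'`, `W v v'` the minimum of the `w_ℓ` over the edges `ℓ`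
of the unique path in `T` from `v` to `v'`. Then `W` is positive semidefinite. -/
theorem forest_formula_covariance_posSemidef
    (n : ℕ) (T : SimpleGraph (Fin n)) (hT : T.IsTree)
    (w : Sym2 (Fin n) → ℝ) (hw : ∀ e, w e ∈ Set.Icc (0 : ℝ) 1)
    (W : Matrix (Fin n) (Fin n) ℝ)
    (hWdiag : ∀ v, W v v = 1)
    (hWoff : ∀ v v', v ≠ v' → ∀ p : T.Walk v v', p.IsPath →
      W v v' = (p.edges.map w).foldr min 1) :
    W.PosSemidef := by
  classical
  -- the level graphs
  let G : ℝ → SimpleGraph (Fin n) := fun t =>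
    { Adj := fun u v => T.Adj u v ∧ t ≤ w s(u, v)
      symm := ⟨fun u v h => ⟨h.1.symm, by rw [Sym2.eq_swap]; exact h.2⟩⟩
      loopless := ⟨fun v h => T.loopless.irrefl v h.1⟩ }
  have hGedge : ∀ (t : ℝ) (e : Sym2 (Fin n)), e ∈ (G t).edgeSet ↔ e ∈ T.edgeSet ∧ t ≤ w e := by
    intro t e
    induction e using Sym2.ind with
    | _ u v => simp [G, SimpleGraph.mem_edgeSet]
  have hGle : ∀ {t₁ t₂ : ℝ}, t₁ ≤ t₂ → G t₂ ≤ G t₁ := by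
    intro t₁ t₂ h12 u v huv
    exact ⟨huv.1, h12.trans huv.2⟩
  -- the level matrices
  let A : ℝ → Matrix (Fin n) (Fin n) ℝ :=
    fun t => Matrix.of fun v v' => if (G t).Reachable v v' then 1 else 0
  -- key characterization of reachability at level t
  have hkey : ∀ (v v' : Fin n), v ≠ v' → ∀ (p : T.Walk v v'), p.IsPath → ∀ t : ℝ,
      ((G t).Reachable v v' ↔ t ≤ (p.edges.map w).foldr min 1) := by
    intro v v' hne p hp t
    constructor
    · rintro ⟨q⟩
      obtain ⟨q', hq'⟩ := q.toPath
      have hsub : ∀ e ∈ q'.edges, e ∈ T.edgeSet :=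
        fun e he => ((hGedge t e).1 (q'.edges_subset_edgeSet he)).1
      have hr : (q'.transfer T hsub).IsPath := hq'.transfer hsub
      obtain ⟨u, _, huniq⟩ := hT.existsUnique_path v v'
      have hpq : p = q'.transfer T hsub := (huniq p hp).trans (huniq _ hr).symm
      have hedges : p.edges = q'.edges := by rw [hpq, SimpleGraph.Walk.edges_transfer]
      have hle : ∀ e ∈ p.edges, t ≤ w e := by
        intro e he
        rw [hedges] at he
        exact ((hGedge t e).1 (q'.edges_subset_edgeSet he)).2
      have hne' : p.edges ≠ [] := by
        intro hnil
        exact hne (SimpleGraph.Walk.eq_of_length_eq_zero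
          (by rw [← SimpleGraph.Walk.length_edges, hnil]; rfl))
      obtain ⟨e₀, he₀⟩ := List.exists_mem_of_ne_nil _ hne'
      have ht1 : t ≤ 1 := (hle e₀ he₀).trans (hw e₀).2
      refine aux_le_foldr_min ht1 ?_
      intro a ha
      obtain ⟨e, he, rfl⟩ := List.mem_map.1 ha
      exact hle e he
    · intro ht
      refine SimpleGraph.Walk.reachable (p.transfer (G t) ?_)
      intro e he
      refine (hGedge t e).2 ⟨p.edges_subset_edgeSet he, ?_⟩
      exact ht.trans (aux_foldr_min_le (List.mem_map_of_mem (f := w) he))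
  -- the entries of A are antitone, hence interval integrable
  have hanti : ∀ v v', Antitone fun t => A t v v' := by
    intro v v' t₁ t₂ h12
    simp only [A, Matrix.of_apply]
    by_cases h2 : (G t₂).Reachable v v'
    · rw [if_pos h2, if_pos (h2.mono (hGle h12))]
    · rw [if_neg h2]
      split_ifs <;> norm_num
  have hint : ∀ v v', IntervalIntegrable (fun t => A t v v') MeasureTheory.volume 0 1 :=
    fun v v' => (hanti v v').intervalIntegrable
  -- W is the integral of the level matrices
  let M : Matrix (Fin n) (Fin n) ℝ := Matrix.of fun v v' => ∫ t in (0:ℝ)..1, A t v v'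
  have hWM : W = M := by
    ext v v'
    by_cases h : v = v'
    · subst h
      have : ∀ t : ℝ, A t v v = 1 := by
        intro t
        simp [A, SimpleGraph.Reachable.refl]
      simp only [M, Matrix.of_apply, hWdiag v]
      simp [this]
    · obtain ⟨p, hp⟩ := (Classical.choice (hT.isConnected v v' : T.Reachable v v')).toPath
      rw [hWoff v v' h p hp]
      set m : ℝ := (p.edges.map w).foldr min 1 with hm
      have hA : ∀ t : ℝ, A t v v' = if t ≤ m then 1 else 0 := by
        intro t
        simp only [A, Matrix.of_apply]
        exact if_congr (hkey v v' h p hp t) rfl rfl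
      have h0 : 0 ≤ m := by
        refine aux_le_foldr_min zero_le_one ?_
        intro a ha
        obtain ⟨e, _, rfl⟩ := List.mem_map.1 ha
        exact (hw e).1
      have h1 : m ≤ 1 := aux_foldr_min_le_one _
      simp only [M, Matrix.of_apply]
      simp_rw [hA]
      exact (aux_integral_ind h0 h1).symm
  rw [hWM]
  rw [Matrix.posSemidef_iff_dotProduct_mulVec]
  constructor
  · apply Matrix.ext
    intro v v'
    simp only [Matrix.conjTranspose_apply, Matrix.of_apply, star_trivial, M]
    refine intervalIntegral.integral_congr fun t _ => ?_
    simp only [A, Matrix.of_apply]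
    exact if_congr ⟨SimpleGraph.Reachable.symm, SimpleGraph.Reachable.symm⟩ rfl rfl
  · intro x
    have hInt2 : ∀ v v', IntervalIntegrable (fun t => x v * (A t v v' * x v'))
        MeasureTheory.volume 0 1 :=
      fun v v' => ((hint v v').mul_const (x v')).const_mul (x v)
    have hquad : star x ⬝ᵥ M *ᵥ x
        = ∫ t in (0:ℝ)..1, ∑ v, ∑ v', x v * (A t v v' * x v') := by
      calc star x ⬝ᵥ M *ᵥ x
          = ∑ v, ∑ v', x v * ((∫ t in (0:ℝ)..1, A t v v') * x v') := by
            simp [dotProduct, Matrix.mulVec, M, Finset.mul_sum]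
        _ = ∑ v, ∑ v', ∫ t in (0:ℝ)..1, x v * (A t v v' * x v') := by
            refine Finset.sum_congr rfl fun v _ => Finset.sum_congr rfl fun v' _ => ?_
            rw [← intervalIntegral.integral_mul_const, ← intervalIntegral.integral_const_mul]
        _ = ∑ v, ∫ t in (0:ℝ)..1, ∑ v', x v * (A t v v' * x v') := by
            exact Finset.sum_congr rfl fun v _ =>
              (intervalIntegral.integral_finset_sum fun v' _ => hInt2 v v').symm
        _ = ∫ t in (0:ℝ)..1, ∑ v, ∑ v', x v * (A t v v' * x v') := by
            refine (intervalIntegral.integral_finset_sum fun v _ => ?_).symm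
            have := IntervalIntegrable.sum (μ := MeasureTheory.volume) (a := (0:ℝ)) (b := 1)
              Finset.univ (f := fun v' t => x v * (A t v v' * x v')) (fun v' _ => hInt2 v v')
            have heq : (∑ v' : Fin n, fun t => x v * (A t v v' * x v'))
                = fun t => ∑ v' : Fin n, x v * (A t v v' * x v') := by
              funext t; simp
            rwa [heq] at this
    rw [hquad]
    refine intervalIntegral.integral_nonneg zero_le_one fun t _ => ?_
    have := (aux_reach_posSemidef (G t)).dotProduct_mulVec_nonneg x
    simpa [dotProduct, Matrix.mulVec, Finset.mul_sum, A] using this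
end
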